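/- Let Y₁, Y₂, … (indexed by n ≥ 1) be a sequence of pairwise disjoint nonempty finite subsets of a type α. Define f : α → ℂ by f(a) = 1/(|Yₙ| · n) if a ∈ Yₙ, and f(a) = 0 if a is in none of the Yₙ. Then f is square-summable, i.e., f belongs to ℓ²(α) (equivalently, ∑_{a ∈ α} |f(a)|² < ∞), and f(a) ≠ 0 for every a ∈ ⋃ₙ Yₙ. -/

import Mathlib

open Set

universe u

/-- The function assigning `1/(|Yₙ| · n)` to the elements of `Yₙ` (here `Yₙ` is the
`(n+1)`-st set of the sequence, `n : ℕ`) and `0` elsewhere is square-summable, i.e. lies in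
`ℓ²(α)`, and is nonzero at every point of `⋃ₙ Yₙ`. -/
theorem russell_socks_ell_two {α : Type u} (Y : ℕ → Set α)
    (hdisj : Pairwise (Function.onFun Disjoint Y))
    (hne : ∀ n, (Y n).Nonempty) (hfin : ∀ n, (Y n).Finite)
    (f : α → ℂ)
    (hf : ∀ n, ∀ a ∈ Y n, f a = 1 / (((Y n).ncard : ℂ) * ((n : ℂ) + 1)))
    (hf0 : ∀ a, a ∉ ⋃ n, Y n → f a = 0) :
    Memℓp f 2 ∧ ∀ a ∈ ⋃ n, Y n, f a ≠ 0 := by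
  have hN : ∀ n, 0 < (Y n).ncard := fun n => (Set.ncard_pos (hfin n)).mpr (hne n)
  -- value of f on Y n
  have hval : ∀ n, ∀ a ∈ Y n, f a = 1 / ((((Y n).ncard * (n + 1) : ℕ)) : ℂ) := by
    intro n a ha
    rw [hf n a ha]
    push_cast
    ring_nf
  have hnorm : ∀ n, ∀ a ∈ Y n, ‖f a‖ = 1 / (((Y n).ncard * (n + 1) : ℕ) : ℝ) := by
    intro n a ha
    rw [hval n a ha]
    rw [norm_div, norm_one, Complex.norm_natCast]
  have hfne : ∀ a ∈ ⋃ n, Y n, f a ≠ 0 := by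
    intro a ha
    obtain ⟨n, hn⟩ := Set.mem_iUnion.mp ha
    rw [hval n a hn]
    have h : ((Y n).ncard * (n + 1) : ℕ) ≠ 0 := Nat.mul_ne_zero (hN n).ne' (Nat.succ_ne_zero n)
    exact one_div_ne_zero (by exact_mod_cast h)
  refine ⟨?_, hfne⟩
  apply memℓp_gen
  have h2 : (2 : ENNReal).toReal = 2 := by norm_num
  rw [h2]
  set g : α → ℝ := fun a => ‖f a‖ ^ (2 : ℝ) with hg
  -- injection from sigma type
  let i : (Σ n, (Y n : Set α)) → α := fun x => x.2.1
  have hi : Function.Injective i := by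
    rintro ⟨n, a, ha⟩ ⟨m, b, hb⟩ h
    simp only [i] at h
    subst h
    have hnm : n = m := by
      by_contra hnm
      exact Set.disjoint_left.mp (hdisj hnm) ha hb
    subst hnm
    rfl
  have hrange : ∀ a ∉ Set.range i, g a = 0 := by
    intro a ha
    have : a ∉ ⋃ n, Y n := by
      intro h
      obtain ⟨n, hn⟩ := Set.mem_iUnion.mp h
      exact ha ⟨⟨n, a, hn⟩, rfl⟩
    simp [hg, hf0 a this, Real.zero_rpow (by norm_num : (2:ℝ) ≠ 0)]
  rw [← Function.Injective.summable_iff hi hrange]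
  have hcomp : ∀ x : (Σ n, (Y n : Set α)),
      g (i x) = 1 / (((Y x.1).ncard * (x.1 + 1) : ℕ) : ℝ) ^ 2 := by
    rintro ⟨n, a, ha⟩
    simp only [hg, i, hnorm n a ha]
    rw [show (2 : ℝ) = ((2 : ℕ) : ℝ) by norm_num, Real.rpow_natCast, div_pow, one_pow]
  have hnn : ∀ x : (Σ n, (Y n : Set α)), 0 ≤ g (i x) := by
    intro x; rw [hcomp x]; positivity
  apply (summable_sigma_of_nonneg hnn).mpr
  constructor
  · intro n
    haveI := (hfin n).to_subtype
    exact Summable.of_finite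
  · -- bound the fiber sums
    have hfsum : ∀ n, ∑' (a : (Y n : Set α)), g (i ⟨n, a⟩)
        = (Y n).ncard * (1 / (((Y n).ncard * (n + 1) : ℕ) : ℝ) ^ 2) := by
      intro n
      haveI := (hfin n).to_subtype
      have hc : ∀ a : (Y n : Set α), g (i ⟨n, a⟩)
          = 1 / (((Y n).ncard * (n + 1) : ℕ) : ℝ) ^ 2 := fun a => hcomp ⟨n, a⟩
      rw [tsum_congr hc, tsum_const, Nat.card_coe_set_eq, nsmul_eq_mul]
    have hb : Summable (fun n : ℕ => 1 / ((n : ℝ) + 1) ^ 2) := by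
      have h := Real.summable_one_div_nat_pow.mpr (by norm_num : 1 < 2)
      have := (summable_nat_add_iff 1).mpr h
      simpa [add_comm] using this
    apply Summable.of_nonneg_of_le _ _ hb
    · intro n; rw [hfsum n]; positivity
    · intro n
      rw [hfsum n]
      have hNpos : (0:ℝ) < (Y n).ncard := by exact_mod_cast hN n
      have : ((Y n).ncard : ℝ) * (1 / (((Y n).ncard * (n + 1) : ℕ) : ℝ) ^ 2)
          = 1 / (((Y n).ncard : ℝ) * ((n:ℝ) + 1) ^ 2) := by
        push_cast
        field_simp
      rw [this]
      rw [div_le_div_iff₀ (by positivity) (by positivity)]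
      have h1 : (1:ℝ) ≤ ((Y n).ncard : ℝ) := by exact_mod_cast hN n
      nlinarith [sq_nonneg ((n:ℝ)+1), sq_nonneg ((n:ℝ))]
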